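/- Suppose ℙ and ℚ are stationary measures on Ω with supp ℚ ⊆ supp ℙ, ℙ satisfies FE and SE with constants γ_+ < 0 and γ_- < 0, and ℚ satisfies condition ID with sequence (k_n) and condition FE with the same constant γ_+. Fix ε ∈ (0,1/2) and 0 < α < γ_+/(8γ_-), and consider the block auxiliary parsing of y_1^N. Then, with ℓ_- := ln N/(−2γ_-), for every block index s and every N large enough, ℚ{y : block s of y_1^N is bad} ≤ e^{k_{ℓ_-}} N^{−2α}. -/

import Mathlib

open MeasureTheory Filter Asymptotics
open scoped ENNReal Classical

set_option maxHeartbeats 1000000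
noncomputable section

namespace ZM

/-- The left shift on one-sided sequences. -/
def shift {A : Type*} (x : ℕ → A) : ℕ → A := fun k => x (k + 1)

/-- The cylinder set of all sequences starting with the word `a`. -/
def cyl {A : Type*} {n : ℕ} (a : Fin n → A) : Set (ℕ → A) := {x | ∀ i : Fin n, x i = a i}

/-- The word `x_{p+1}^{p+ℓ}` of `x` (0-based: the letters at positions `p, …, p+ℓ-1`). -/
def seg {A : Type*} (y : ℕ → A) (p ℓ : ℕ) : Fin ℓ → A := fun i => y (p + i)

/-- `w` occurs in `x` at (0-based) offset `r`. -/
def matchAt {A : Type*} (x : ℕ → A) {ℓ : ℕ} (w : Fin ℓ → A) (r : ℕ) : Prop :=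
  ∀ i : Fin ℓ, x (r + i) = w i

/-- `w` appears as a substring of `x_1^N`. -/
def appears {A : Type*} (N : ℕ) (x : ℕ → A) {ℓ : ℕ} (w : Fin ℓ → A) : Prop :=
  ∃ r, r + ℓ ≤ N ∧ matchAt x w r

/-- The waiting time `W_ℓ(w, x)`: the least (1-based) position at which `w` occurs in `x`,
`⊤` if `w` never occurs. -/
def W {A : Type*} {ℓ : ℕ} (w : Fin ℓ → A) (x : ℕ → A) : ℕ∞ :=
  sInf {r : ℕ∞ | ∃ n : ℕ, r = (n : ℕ∞) ∧ 1 ≤ n ∧ matchAt x w (n - 1)}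

section ZMparsing

variable {A : Type*}

/-- Length of the Ziv–Merhav word starting at (0-based) position `p` of `y_1^N`, with
database `x_1^N`: the longest prefix of the remaining portion of `y_1^N` appearing as a
substring of `x_1^N`, or a single letter if there is no such prefix. -/
def zmLen (N : ℕ) (x y : ℕ → A) (p : ℕ) : ℕ :=
  max 1 (sSup {ℓ | p + ℓ ≤ N ∧ appears N x (seg y p ℓ)})

/-- Starting position of the `j`-th (0-based) word of the Ziv–Merhav parsing. -/
def zmPos (N : ℕ) (x y : ℕ → A) : ℕ → ℕ
  | 0 => 0
  | j + 1 => zmPos N x y j + zmLen N x y (zmPos N x y j)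

/-- `c_N(y|x)`: the number of words in the Ziv–Merhav parsing of `y_1^N` w.r.t. `x_1^N`. -/
def cN (N : ℕ) (x y : ℕ → A) : ℕ := sInf {c | N ≤ zmPos N x y c}

/-- The Ziv–Merhav estimator `Q̂_N(y, x) = c_N(y|x) ln N / N`. -/
def ZMest (N : ℕ) (x y : ℕ → A) : ℝ := (cN N x y : ℝ) * Real.log N / N

end ZMparsing

section MeasureDefs

variable {A : Type*} [MeasurableSpace A]

/-- The measure of the cylinder of a word, as a real number. -/
def wp (μ : Measure (ℕ → A)) {n : ℕ} (a : Fin n → A) : ℝ := (μ (cyl a)).toReal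

/-- `supp ℙ`: the set of sequences all of whose prefixes have positive measure. -/
def suppSet (μ : Measure (ℕ → A)) : Set (ℕ → A) := {x | ∀ n, 0 < μ (cyl (seg x 0 n))}

/-- Condition (ID): immediate decoupling on the support, with sequence `k`. -/
def CondID (μ : Measure (ℕ → A)) (k : ℕ → ℝ) : Prop :=
  Monotone k ∧ (k =o[atTop] fun n => (n : ℝ)) ∧
    ∀ (n m : ℕ) (a : Fin n → A) (b : Fin m → A), 0 < μ (cyl a) → 0 < μ (cyl b) →
      wp μ (Fin.append a b) ≤ Real.exp (k n) * (wp μ a * wp μ b) ∧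
      (0 < μ (cyl (Fin.append a b)) →
        Real.exp (-k n) * (wp μ a * wp μ b) ≤ wp μ (Fin.append a b))

/-- Condition (FE): fast enough decay, with rate `γp < 0`. -/
def CondFE (μ : Measure (ℕ → A)) (γp : ℝ) : Prop :=
  γp < 0 ∧ ∀ᶠ n : ℕ in atTop, ∀ a : Fin n → A, 0 < μ (cyl a) → wp μ a ≤ Real.exp (γp * n)

/-- Condition (SE): slow enough decay, with rate `γm < 0`. -/
def CondSE (μ : Measure (ℕ → A)) (γm : ℝ) : Prop :=
  γm < 0 ∧ ∀ᶠ n : ℕ in atTop, ∀ a : Fin n → A, 0 < μ (cyl a) → Real.exp (γm * n) ≤ wp μ a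

/-- Condition (KB): Kontoyiannis' bound on waiting times, with sequences `k`, `τ`. -/
def CondKB (μ : Measure (ℕ → A)) (k τ : ℕ → ℝ) : Prop :=
  (k =o[atTop] fun n => (n : ℝ)) ∧ (τ =o[atTop] fun n => (n : ℝ)) ∧
    ∀ (ℓ : ℕ) (a : Fin ℓ → A) (r : ℕ),
      (μ {x | (r : ℕ∞) ≤ W a x}).toReal ≤
        Real.exp (-(Real.exp (-k ℓ) * wp μ a * (⌊((r : ℝ) - 1) / ((ℓ : ℝ) + τ ℓ)⌋ : ℝ)))

/-- Length of the next word of the auxiliary parsing of `y_1^N` starting at position `p`: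
the shortest prefix of the remaining portion of `y_1^N` with measure at most `θ`, or the
whole remaining portion if there is no such prefix. -/
def auxLen (μ : Measure (ℕ → A)) (θ : ℝ) (N : ℕ) (y : ℕ → A) (p : ℕ) : ℕ :=
  if ∃ ℓ, 1 ≤ ℓ ∧ p + ℓ ≤ N ∧ wp μ (seg y p ℓ) ≤ θ then
    sInf {ℓ | 1 ≤ ℓ ∧ p + ℓ ≤ N ∧ wp μ (seg y p ℓ) ≤ θ}
  else N - p

/-- Starting position of the `j`-th (0-based) word of the auxiliary parsing. -/
def auxPos (μ : Measure (ℕ → A)) (θ : ℝ) (N : ℕ) (y : ℕ → A) : ℕ → ℕ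
  | 0 => 0
  | j + 1 => auxPos μ θ N y j + max 1 (auxLen μ θ N y (auxPos μ θ N y j))

/-- Length of the `j`-th (0-based) word of the auxiliary parsing. -/
def auxWordLen (μ : Measure (ℕ → A)) (θ : ℝ) (N : ℕ) (y : ℕ → A) (j : ℕ) : ℕ :=
  max 1 (auxLen μ θ N y (auxPos μ θ N y j))

/-- The number of words in the auxiliary parsing of `y_1^N`. -/
def auxCount (μ : Measure (ℕ → A)) (θ : ℝ) (N : ℕ) (y : ℕ → A) : ℕ :=
  sInf {c | N ≤ auxPos μ θ N y c}

/-- Length of the next word of the block parsing within a block ending at position `e`: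
the shortest prefix of the remaining portion of the block with measure at most `θ`;
`0` encodes that no such prefix exists (the rest of the block is the buffer). -/
def blkLen (μ : Measure (ℕ → A)) (θ : ℝ) (e : ℕ) (y : ℕ → A) (p : ℕ) : ℕ :=
  sInf {ℓ | 1 ≤ ℓ ∧ p + ℓ ≤ e ∧ wp μ (seg y p ℓ) ≤ θ}

/-- Starting position of the `i`-th (0-based) word of the block starting at `q`, ending at `e`. -/
def blkPos (μ : Measure (ℕ → A)) (θ : ℝ) (e : ℕ) (y : ℕ → A) (q : ℕ) : ℕ → ℕ
  | 0 => q
  | i + 1 => blkPos μ θ e y q i + blkLen μ θ e y (blkPos μ θ e y q i)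

/-- Number `d_s` of words in the block starting at `q` and ending at `e`. -/
def dCount (μ : Measure (ℕ → A)) (θ : ℝ) (e : ℕ) (y : ℕ → A) (q : ℕ) : ℕ :=
  sInf {i | blkLen μ θ e y (blkPos μ θ e y q i) = 0}

/-- The block starting at `q` and ending at `e` is good: its parsed words are pairwise
distinct. -/
def GoodBlock (μ : Measure (ℕ → A)) (θ : ℝ) (e : ℕ) (y : ℕ → A) (q : ℕ) : Prop :=
  ∀ i j : ℕ, i < dCount μ θ e y q → j < dCount μ θ e y q →
    blkLen μ θ e y (blkPos μ θ e y q i) = blkLen μ θ e y (blkPos μ θ e y q j) →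
    (∀ t < blkLen μ θ e y (blkPos μ θ e y q i),
      y (blkPos μ θ e y q i + t) = y (blkPos μ θ e y q j + t)) →
    i = j

end MeasureDefs

/-- The block length `⌊N^α⌋`. -/
def blockB (N : ℕ) (α : ℝ) : ℕ := ⌊(N : ℝ) ^ α⌋₊

/-- The number `M_N` of blocks. -/
def blockM (N : ℕ) (α : ℝ) : ℕ := (N + blockB N α - 1) / blockB N α

/-- The starting position of the `s`-th (0-based) block. -/
def blockStart (N : ℕ) (α : ℝ) (s : ℕ) : ℕ := s * blockB N α

/-- The end position of the `s`-th (0-based) block. -/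
def blockEnd (N : ℕ) (α : ℝ) (s : ℕ) : ℕ := min ((s + 1) * blockB N α) N

/-- `S_b(y_1^N)`: the set of bad blocks of the block auxiliary parsing (with threshold
`N^{-1-ε}`, word probabilities computed with `μ`). -/
def badSet {A : Type*} [MeasurableSpace A] (μ : Measure (ℕ → A)) (N : ℕ) (α ε : ℝ)
    (y : ℕ → A) : Set ℕ :=
  {s | s < blockM N α ∧
    ¬ GoodBlock μ ((N : ℝ) ^ (-1 - ε)) (blockEnd N α s) y (blockStart N α s)}

/-- `ℓ₋ = ln N / (-2 γ₋)`. -/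
def ellMinus (N : ℕ) (γm : ℝ) : ℝ := Real.log N / (-2 * γm)

/-- `ℓ₊ = 2 ln N / (-γ₊)`. -/
def ellPlus (N : ℕ) (γp : ℝ) : ℝ := 2 * Real.log N / (-γp)

/-- `d₊ = 2 N^α / ℓ₋`. -/
def dPlus (N : ℕ) (α γm : ℝ) : ℝ := 2 * (N : ℝ) ^ α / ellMinus N γm

section CrossEntropy

variable {A : Type*} [MeasurableSpace A] [Fintype A]

/-- The `n`-th cross-entropy average `-(1/n) ∑_{a ∈ 𝒜ⁿ} ℚ[a] ln ℙ[a]`, real-valued version. -/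
def hcSeq (μP μQ : Measure (ℕ → A)) (n : ℕ) : ℝ :=
  -(1 / (n : ℝ)) * ∑ a : Fin n → A, wp μQ a * Real.log (wp μP a)

/-- `-ln p` as an element of `[0, ∞]`, for `p ∈ [0, 1]`; equals `⊤` when `p = 0`. -/
def negLog (p : ℝ≥0∞) : ℝ≥0∞ := if p = 0 then ⊤ else ENNReal.ofReal (-Real.log p.toReal)

/-- The `n`-th cross-entropy average, `[0, ∞]`-valued version. -/
def hcSeqE (μP μQ : Measure (ℕ → A)) (n : ℕ) : ℝ≥0∞ :=
  (∑ a : Fin n → A, μQ (cyl a) * negLog (μP (cyl a))) / (n : ℝ≥0∞)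

end CrossEntropy

end ZM

namespace ZM
set_option linter.unusedSectionVars false

section Atoms
variable {A : Type*} [MeasurableSpace A] [Fintype A]

def atomOf (a : A) : Set A := ⋂₀ {M : Set A | MeasurableSet M ∧ a ∈ M}

lemma mem_atomOf_self (a : A) : a ∈ atomOf a := fun _ hM => hM.2

lemma atomOf_subset {a : A} {M : Set A} (hM : MeasurableSet M) (ha : a ∈ M) : atomOf a ⊆ M :=
  Set.sInter_subset_of_mem ⟨hM, ha⟩

lemma measurableSet_atomOf (a : A) : MeasurableSet (atomOf a) := by
  haveI : Finite (Set A) := inferInstance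
  exact MeasurableSet.sInter (Set.to_countable _) (fun t ht => ht.1)

lemma mem_atomOf_symm {a b : A} (h : b ∈ atomOf a) : a ∈ atomOf b := by
  by_contra hab
  have : ∃ M : Set A, MeasurableSet M ∧ b ∈ M ∧ a ∉ M := by
    simpa [atomOf, Set.mem_sInter, not_forall] using hab
  obtain ⟨M, hM, hbM, haM⟩ := this
  have hsub : atomOf a ⊆ Mᶜ := atomOf_subset hM.compl haM
  exact hsub h hbM

lemma atomOf_eq_of_mem {a b : A} (h : b ∈ atomOf a) : atomOf b = atomOf a := by
  have h' : a ∈ atomOf b := mem_atomOf_symm h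
  apply Set.Subset.antisymm
  · exact Set.subset_sInter (fun M hM => atomOf_subset hM.1 (Set.mem_sInter.1 h M hM))
  · exact Set.subset_sInter (fun M hM => atomOf_subset hM.1 (Set.mem_sInter.1 h' M hM))

noncomputable def repSet [Nonempty A] (s : Set A) : A :=
  if h : s.Nonempty then h.some else Classical.arbitrary A

noncomputable def arep [Nonempty A] (a : A) : A := repSet (atomOf a)

lemma arep_mem [Nonempty A] (a : A) : arep a ∈ atomOf a := by
  have h : (atomOf a).Nonempty := ⟨a, mem_atomOf_self a⟩
  simp only [arep, repSet, dif_pos h]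
  exact h.some_mem

lemma arep_congr [Nonempty A] {a b : A} (h : atomOf a = atomOf b) : arep a = arep b := by
  rw [arep, arep, h]

lemma atomOf_arep [Nonempty A] (a : A) : atomOf (arep a) = atomOf a :=
  atomOf_eq_of_mem (arep_mem a)

lemma arep_idem [Nonempty A] (a : A) : arep (arep a) = arep a :=
  arep_congr (atomOf_arep a)

end Atoms


section Acyl
variable {A : Type*} [MeasurableSpace A] [Fintype A]

lemma shift_iterate_apply (p : ℕ) (x : ℕ → A) (k : ℕ) : (shift^[p] x) k = x (k + p) := by
  induction p generalizing x with
  | zero => rfl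
  | succ p ih =>
    rw [Function.iterate_succ_apply, ih]
    simp [shift, Nat.add_assoc]

def acyl {n : ℕ} (v : Fin n → A) : Set (ℕ → A) := {x | ∀ i : Fin n, x (i : ℕ) ∈ atomOf (v i)}

lemma measurableSet_acyl {n : ℕ} (v : Fin n → A) : MeasurableSet (acyl v) := by
  have : acyl v = ⋂ i : Fin n, (fun x : ℕ → A => x (i : ℕ)) ⁻¹' atomOf (v i) := by
    ext x; simp [acyl]
  rw [this]
  exact MeasurableSet.iInter fun i => measurable_pi_apply _ (measurableSet_atomOf (v i))

lemma measurableSet_invariant {T : Set (ℕ → A)} (hT : MeasurableSet T)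
    {x x' : ℕ → A} (hxx : ∀ i, x' i ∈ atomOf (x i)) (hx : x ∈ T) : x' ∈ T := by
  let m' : MeasurableSpace (ℕ → A) :=
    { MeasurableSet' := fun S => ∀ y ∈ S, ∀ y' : ℕ → A, (∀ i, y' i ∈ atomOf (y i)) → y' ∈ S
      measurableSet_empty := fun y hy => absurd hy (Set.notMem_empty y)
      measurableSet_compl := by
        intro S hS y hy y' hyy hy'
        exact hy (hS y' hy' y (fun i => mem_atomOf_symm (hyy i)))
      measurableSet_iUnion := by
        intro f hf y hy y' hyy
        obtain ⟨i, hi⟩ := Set.mem_iUnion.1 hy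
        exact Set.mem_iUnion.2 ⟨i, hf i y hi y' hyy⟩ }
  have hle : (MeasurableSpace.pi : MeasurableSpace (ℕ → A)) ≤ m' := by
    refine iSup_le fun i => ?_
    intro S hS
    obtain ⟨M, hM, rfl⟩ := hS
    intro y hy y' hyy
    exact atomOf_subset hM hy (hyy i)
  exact hle T hT x hx x' hxx

lemma cyl_subset_acyl {n : ℕ} (v : Fin n → A) : cyl v ⊆ acyl v := by
  intro x hx i
  rw [hx i]
  exact mem_atomOf_self _

lemma acyl_subset_of_cyl_subset {n : ℕ} {v : Fin n → A} {T : Set (ℕ → A)}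
    (hT : MeasurableSet T) (h : cyl v ⊆ T) : acyl v ⊆ T := by
  intro x' hx'
  set x : ℕ → A := fun i => if h' : i < n then v ⟨i, h'⟩ else x' i with hxdef
  have hx : x ∈ cyl v := by
    intro i
    simp [hxdef, i.isLt]
  refine measurableSet_invariant hT (x := x) (x' := x') ?_ (h hx)
  intro i
  by_cases h' : i < n
  · have hxi : x i = v ⟨i, h'⟩ := by simp [hxdef, h']
    rw [hxi]
    exact hx' ⟨i, h'⟩
  · have hxi : x i = x' i := by simp [hxdef, h']
    rw [hxi]
    exact mem_atomOf_self _

lemma measure_acyl_eq (μ : Measure (ℕ → A)) {n : ℕ} (v : Fin n → A) :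
    μ (acyl v) = μ (cyl v) := by
  refine le_antisymm ?_ (measure_mono (cyl_subset_acyl v))
  calc μ (acyl v) ≤ μ (toMeasurable μ (cyl v)) :=
        measure_mono (acyl_subset_of_cyl_subset (measurableSet_toMeasurable μ _)
          (subset_toMeasurable μ _))
    _ = μ (cyl v) := measure_toMeasurable _

lemma acyl_append {n m : ℕ} (a : Fin n → A) (b : Fin m → A) :
    acyl (Fin.append a b) = acyl a ∩ shift^[n] ⁻¹' acyl b := by
  ext x
  simp only [acyl, Set.mem_setOf_eq, Set.mem_inter_iff, Set.mem_preimage]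
  constructor
  · intro h
    refine ⟨fun i => ?_, fun j => ?_⟩
    · have := h (Fin.castAdd m i)
      rwa [Fin.append_left, Fin.coe_castAdd] at this
    · have := h (Fin.natAdd n j)
      rw [Fin.append_right, Fin.coe_natAdd] at this
      simpa [shift_iterate_apply, Nat.add_comm] using this
  · rintro ⟨h1, h2⟩ i
    refine Fin.addCases (motive := fun i => x (i : ℕ) ∈ atomOf (Fin.append a b i)) ?_ ?_ i
    · intro i
      rw [Fin.append_left, Fin.coe_castAdd]
      exact h1 i
    · intro j
      rw [Fin.append_right, Fin.coe_natAdd]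
      have := h2 j
      rw [shift_iterate_apply] at this
      rwa [Nat.add_comm]

end Acyl

section Core
variable {A : Type*} [MeasurableSpace A] [Fintype A]

lemma measure_preimage_iterate_le {μ : Measure (ℕ → A)}
    (hstat : MeasurePreserving shift μ μ) (p : ℕ) (S : Set (ℕ → A)) :
    μ (shift^[p] ⁻¹' S) ≤ μ S := by
  calc μ (shift^[p] ⁻¹' S) ≤ μ (shift^[p] ⁻¹' toMeasurable μ S) :=
        measure_mono (Set.preimage_mono (subset_toMeasurable μ S))
    _ = μ (toMeasurable μ S) :=
        (hstat.iterate p).measure_preimage (measurableSet_toMeasurable μ S).nullMeasurableSet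
    _ = μ S := measure_toMeasurable S

lemma suppSet_compl_null (μ : Measure (ℕ → A)) : μ (suppSet μ)ᶜ = 0 := by
  have h : (suppSet μ)ᶜ ⊆ ⋃ (n : ℕ) (a : {a : Fin n → A // μ (cyl a) = 0}), cyl a.1 := by
    intro x hx
    simp only [suppSet, Set.mem_compl_iff, Set.mem_setOf_eq, not_forall, not_lt,
      nonpos_iff_eq_zero] at hx
    obtain ⟨n, hn⟩ := hx
    refine Set.mem_iUnion.2 ⟨n, Set.mem_iUnion.2 ⟨⟨seg x 0 n, hn⟩, ?_⟩⟩
    intro i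
    simp [seg]
  refine le_antisymm (le_trans (measure_mono h) ?_) zero_le
  refine le_trans (measure_iUnion_le _) ?_
  have : ∀ n : ℕ, μ (⋃ (a : {a : Fin n → A // μ (cyl a) = 0}), cyl a.1) = 0 := by
    intro n
    refine le_antisymm (le_trans (measure_iUnion_le _) ?_) zero_le
    simp [fun a : {a : Fin n → A // μ (cyl a) = 0} => a.2]
  simp [this]

variable [Nonempty A]

/-- The finset of atom-representative words of length `n`. -/
noncomputable def repFix (A : Type*) [MeasurableSpace A] [Fintype A] [Nonempty A] (n : ℕ) :
    Finset (Fin n → A) :=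
  Finset.univ.filter (fun u => ∀ i, arep (u i) = u i)

lemma arep_comp_mem_repFix {n : ℕ} (f : Fin n → A) :
    (fun i => arep (f i)) ∈ repFix A n := by
  simp only [repFix, Finset.mem_filter, Finset.mem_univ, true_and]
  exact fun i => arep_idem (f i)

lemma mem_acyl_arep_comp {n : ℕ} (x : ℕ → A) {f : Fin n → A}
    (hf : ∀ i : Fin n, atomOf (f i) = atomOf (x (i : ℕ))) :
    x ∈ acyl (fun i => arep (f i)) := by
  intro i
  rw [atomOf_arep, hf i]
  exact mem_atomOf_self _

lemma eq_arep_of_mem_acyl {n : ℕ} {u : Fin n → A} (hu : u ∈ repFix A n) {x : ℕ → A}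
    (hx : x ∈ acyl u) : ∀ i : Fin n, u i = arep (x (i : ℕ)) := by
  intro i
  have h1 : arep (u i) = u i := by
    simp only [repFix, Finset.mem_filter] at hu
    exact hu.2 i
  rw [← h1]
  exact arep_congr (atomOf_eq_of_mem (hx i)).symm

lemma acyl_repFix_disjoint {n : ℕ} :
    (↑(repFix A n) : Set (Fin n → A)).PairwiseDisjoint (fun u => acyl (A := A) u) := by
  intro u hu u' hu' hne
  rw [Function.onFun, Set.disjoint_left]
  intro x hx hx'
  refine hne (funext fun i => ?_)
  rw [eq_arep_of_mem_acyl hu hx i, eq_arep_of_mem_acyl hu' hx' i]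

lemma acyl_repFix_cover (n : ℕ) : ⋃ u ∈ repFix A n, acyl (A := A) u = Set.univ := by
  refine Set.eq_univ_of_forall fun x => ?_
  refine Set.mem_biUnion (arep_comp_mem_repFix (fun i : Fin n => x (i : ℕ))) ?_
  exact mem_acyl_arep_comp x (fun i => rfl)

lemma sum_measure_acyl_repFix (μ : Measure (ℕ → A)) [IsProbabilityMeasure μ] (n : ℕ) :
    ∑ u ∈ repFix A n, μ (acyl u) = 1 := by
  rw [← measure_biUnion_finset acyl_repFix_disjoint (fun u _ => measurableSet_acyl u),
    acyl_repFix_cover, measure_univ]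


lemma G_bound {μ : Measure (ℕ → A)} [IsProbabilityMeasure μ]
    (hstat : MeasurePreserving shift μ μ) {k : ℕ → ℝ}
    (hID : ∀ (n m : ℕ) (a : Fin n → A) (b : Fin m → A), 0 < μ (cyl a) → 0 < μ (cyl b) →
      wp μ (Fin.append a b) ≤ Real.exp (k n) * (wp μ a * wp μ b))
    {L r : ℕ} (hLr : L ≤ r) {cmax : ℝ} (hcmax : 0 ≤ cmax)
    (hmax : ∀ u : Fin L → A, 0 < μ (cyl u) → wp μ u ≤ cmax) (p : ℕ) :
    μ {y : ℕ → A | ∀ t < L, y (p + t) = y (p + r + t)} ≤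
      ENNReal.ofReal (Real.exp (k L) * cmax) := by
  have hset : {y : ℕ → A | ∀ t < L, y (p + t) = y (p + r + t)} =
      shift^[p] ⁻¹' {y : ℕ → A | ∀ t < L, y t = y (r + t)} := by
    ext x
    simp only [Set.mem_preimage, Set.mem_setOf_eq, shift_iterate_apply]
    constructor
    · intro h t ht
      have := h t ht
      have e1 : p + t = t + p := Nat.add_comm _ _
      have e2 : p + r + t = r + t + p := by omega
      rw [e1, e2] at this
      exact this
    · intro h t ht
      have := h t ht
      have e1 : p + t = t + p := Nat.add_comm _ _
      have e2 : p + r + t = r + t + p := by omega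
      rw [e1, e2]
      exact this
  rw [hset]
  refine le_trans (measure_preimage_iterate_le hstat p _) ?_
  set G0 : Set (ℕ → A) := {y : ℕ → A | ∀ t < L, y t = y (r + t)} with hG0def
  set X : (Fin L → A) → Set (ℕ → A) := fun u => acyl u ∩ shift^[r] ⁻¹' acyl u with hXdef
  -- G0 is covered by the X u for u in repFix
  have hG0cov : G0 ⊆ ⋃ u ∈ repFix A L, X u := by
    intro y hy
    refine Set.mem_biUnion (arep_comp_mem_repFix (fun i : Fin L => y (i : ℕ))) ?_
    constructor
    · exact mem_acyl_arep_comp y (fun i => rfl)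
    · refine mem_acyl_arep_comp (shift^[r] y) (fun i => ?_)
      rw [shift_iterate_apply]
      have h1 : y (i : ℕ) = y (r + (i : ℕ)) := hy (i : ℕ) i.isLt
      rw [h1, Nat.add_comm]
  -- the word-level decomposition of X u
  have hY : ∀ (u : Fin L → A) (m : Fin (r - L) → A),
      acyl (Fin.append u (Fin.append m u)) = X u ∩ shift^[L] ⁻¹' acyl m := by
    intro u m
    rw [acyl_append, acyl_append, Set.preimage_inter, ← Set.preimage_comp,
      ← Function.iterate_add, Nat.sub_add_cancel hLr]
    ext x
    simp only [Set.mem_inter_iff, Set.mem_preimage, hXdef]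
    tauto
  -- per-u bound
  have hXu : ∀ u ∈ repFix A L, (μ (X u)).toReal ≤
      Real.exp (k L) * ((μ (acyl u)).toReal * (μ (acyl u)).toReal) := by
    intro u hu
    have hdisj : (↑(repFix A (r - L)) : Set (Fin (r - L) → A)).PairwiseDisjoint
        (fun m => acyl (Fin.append u (Fin.append m u))) := by
      intro m hm m' hm' hne
      rw [Function.onFun, Set.disjoint_left]
      intro x hx hx'
      refine absurd (funext fun i => ?_) hne
      rw [hY] at hx hx'
      rw [eq_arep_of_mem_acyl hm hx.2 i, eq_arep_of_mem_acyl hm' hx'.2 i]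
    have hcover : X u = ⋃ m ∈ repFix A (r - L), acyl (Fin.append u (Fin.append m u)) := by
      apply Set.Subset.antisymm
      · intro x hx
        refine Set.mem_biUnion
          (arep_comp_mem_repFix (fun i : Fin (r - L) => x (L + (i : ℕ)))) ?_
        rw [hY]
        refine ⟨hx, mem_acyl_arep_comp (shift^[L] x) (fun i => ?_)⟩
        rw [shift_iterate_apply, Nat.add_comm]
      · refine Set.iUnion₂_subset fun m hm => ?_
        rw [hY]
        exact Set.inter_subset_left
    have hXeq : μ (X u) = ∑ m ∈ repFix A (r - L), μ (acyl (Fin.append u (Fin.append m u))) := by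
      rw [hcover]
      exact measure_biUnion_finset hdisj (fun m _ => measurableSet_acyl _)
    have hmb : ∀ m ∈ repFix A (r - L), (μ (acyl (Fin.append u (Fin.append m u)))).toReal ≤
        Real.exp (k L) * ((μ (acyl u)).toReal * (μ (acyl (Fin.append m u))).toReal) := by
      intro m hm
      by_cases h0 : μ (acyl (Fin.append u (Fin.append m u))) = 0
      · rw [h0]
        simp only [ENNReal.toReal_zero]
        positivity
      · have hpos : 0 < μ (acyl (Fin.append u (Fin.append m u))) := zero_lt_iff.2 h0
        have hu0 : 0 < μ (cyl u) := by
          rw [← measure_acyl_eq]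
          refine lt_of_lt_of_le hpos (measure_mono ?_)
          rw [acyl_append]
          exact Set.inter_subset_left
        have hb0 : 0 < μ (cyl (Fin.append m u)) := by
          rw [← measure_acyl_eq]
          refine lt_of_lt_of_le (lt_of_lt_of_le hpos (measure_mono ?_))
            (measure_preimage_iterate_le hstat L _)
          rw [acyl_append]
          exact Set.inter_subset_right
        have h := hID L _ u (Fin.append m u) hu0 hb0
        simpa [wp, measure_acyl_eq] using h
    have hsum_m : ∑ m ∈ repFix A (r - L), (μ (acyl (Fin.append m u))).toReal ≤
        (μ (acyl u)).toReal := by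
      have hdisj2 : (↑(repFix A (r - L)) : Set (Fin (r - L) → A)).PairwiseDisjoint
          (fun m => acyl (Fin.append m u)) := by
        intro m hm m' hm' hne
        rw [Function.onFun, Set.disjoint_left]
        intro x hx hx'
        refine absurd (funext fun i => ?_) hne
        rw [acyl_append] at hx hx'
        rw [eq_arep_of_mem_acyl hm hx.1 i, eq_arep_of_mem_acyl hm' hx'.1 i]
      have hEq : ∑ m ∈ repFix A (r - L), μ (acyl (Fin.append m u)) =
          μ (⋃ m ∈ repFix A (r - L), acyl (Fin.append m u)) :=
        (measure_biUnion_finset hdisj2 (fun m _ => measurableSet_acyl _)).symm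
      have hsub : (⋃ m ∈ repFix A (r - L), acyl (Fin.append m u)) ⊆
          shift^[r - L] ⁻¹' acyl u := by
        refine Set.iUnion₂_subset fun m hm => ?_
        rw [acyl_append]
        exact Set.inter_subset_right
      have h1 : ∑ m ∈ repFix A (r - L), μ (acyl (Fin.append m u)) ≤ μ (acyl u) := by
        rw [hEq]
        exact le_trans (measure_mono hsub) (measure_preimage_iterate_le hstat _ _)
      have h2 := ENNReal.toReal_mono (measure_ne_top μ _) h1
      rwa [ENNReal.toReal_sum (fun m _ => measure_ne_top μ _)] at h2
    calc (μ (X u)).toReal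
        = ∑ m ∈ repFix A (r - L), (μ (acyl (Fin.append u (Fin.append m u)))).toReal := by
          rw [hXeq, ENNReal.toReal_sum (fun m _ => measure_ne_top μ _)]
      _ ≤ ∑ m ∈ repFix A (r - L),
            Real.exp (k L) * ((μ (acyl u)).toReal * (μ (acyl (Fin.append m u))).toReal) :=
          Finset.sum_le_sum hmb
      _ = Real.exp (k L) * (μ (acyl u)).toReal *
            ∑ m ∈ repFix A (r - L), (μ (acyl (Fin.append m u))).toReal := by
          rw [Finset.mul_sum]
          congr 1
          ext m
          ring
      _ ≤ Real.exp (k L) * (μ (acyl u)).toReal * (μ (acyl u)).toReal := by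
          refine mul_le_mul_of_nonneg_left hsum_m ?_
          positivity
      _ = Real.exp (k L) * ((μ (acyl u)).toReal * (μ (acyl u)).toReal) := by ring
  -- total bound
  have htot : (μ G0).toReal ≤ Real.exp (k L) * cmax := by
    have h1 : μ G0 ≤ ∑ u ∈ repFix A L, μ (X u) :=
      le_trans (measure_mono hG0cov) (measure_biUnion_finset_le _ _)
    have hXne : ∀ u ∈ repFix A L, μ (X u) ≠ ⊤ := fun u _ => measure_ne_top μ _
    have h2 : (μ G0).toReal ≤ ∑ u ∈ repFix A L, (μ (X u)).toReal := by
      have := ENNReal.toReal_mono (ENNReal.sum_ne_top.2 hXne) h1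
      rwa [ENNReal.toReal_sum hXne] at this
    have h3 : ∀ u ∈ repFix A L, (μ (X u)).toReal ≤
        Real.exp (k L) * cmax * (μ (acyl u)).toReal := by
      intro u hu
      refine le_trans (hXu u hu) ?_
      by_cases h0 : μ (acyl u) = 0
      · rw [h0]; simp
      · have hu0 : 0 < μ (cyl u) := by rw [← measure_acyl_eq]; exact zero_lt_iff.2 h0
        have := hmax u hu0
        have hwpeq : wp μ u = (μ (acyl u)).toReal := by rw [wp, measure_acyl_eq]
        rw [hwpeq] at this
        have hnn : 0 ≤ (μ (acyl u)).toReal := ENNReal.toReal_nonneg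
        calc Real.exp (k L) * ((μ (acyl u)).toReal * (μ (acyl u)).toReal)
            ≤ Real.exp (k L) * (cmax * (μ (acyl u)).toReal) := by
              refine mul_le_mul_of_nonneg_left (mul_le_mul_of_nonneg_right this hnn)
                (le_of_lt (Real.exp_pos _))
          _ = Real.exp (k L) * cmax * (μ (acyl u)).toReal := by ring
    have h4 : ∑ u ∈ repFix A L, (μ (acyl u)).toReal = 1 := by
      have := sum_measure_acyl_repFix μ L
      have h5 := congrArg ENNReal.toReal this
      rwa [ENNReal.toReal_sum (fun u _ => measure_ne_top μ _), ENNReal.toReal_one] at h5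
    calc (μ G0).toReal ≤ ∑ u ∈ repFix A L, (μ (X u)).toReal := h2
      _ ≤ ∑ u ∈ repFix A L, Real.exp (k L) * cmax * (μ (acyl u)).toReal :=
          Finset.sum_le_sum h3
      _ = Real.exp (k L) * cmax * ∑ u ∈ repFix A L, (μ (acyl u)).toReal := by
          rw [Finset.mul_sum]
      _ = Real.exp (k L) * cmax := by rw [h4, mul_one]
  exact (ENNReal.le_ofReal_iff_toReal_le (measure_ne_top μ _) (by positivity)).2 htot

end Core

section Parsing
variable {A : Type*} [MeasurableSpace A]

lemma blkPos_mono (μ : Measure (ℕ → A)) (θ : ℝ) (e : ℕ) (y : ℕ → A) (q : ℕ) :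
    Monotone (blkPos μ θ e y q) :=
  monotone_nat_of_le_succ fun n => Nat.le_add_right _ _

lemma le_blkPos (μ : Measure (ℕ → A)) (θ : ℝ) (e : ℕ) (y : ℕ → A) (q : ℕ) (i : ℕ) :
    q ≤ blkPos μ θ e y q i := by
  have h : blkPos μ θ e y q 0 = q := rfl
  rw [← h]
  exact blkPos_mono μ θ e y q (Nat.zero_le i)

lemma blkLen_spec {μ : Measure (ℕ → A)} {θ : ℝ} {e : ℕ} {y : ℕ → A} {p : ℕ}
    (h : blkLen μ θ e y p ≠ 0) :
    1 ≤ blkLen μ θ e y p ∧ p + blkLen μ θ e y p ≤ e ∧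
      wp μ (seg y p (blkLen μ θ e y p)) ≤ θ := by
  have hne : {ℓ | 1 ≤ ℓ ∧ p + ℓ ≤ e ∧ wp μ (seg y p ℓ) ≤ θ}.Nonempty := by
    by_contra h'
    rw [Set.not_nonempty_iff_eq_empty] at h'
    rw [blkLen, h', Nat.sInf_empty] at h
    exact h rfl
  exact Nat.sInf_mem hne

lemma bad_implies_pair {μ : Measure (ℕ → A)} {θ : ℝ} {e q L : ℕ} {y : ℕ → A}
    (hbad : ¬ GoodBlock μ θ e y q)
    (hlen : ∀ p ℓ, ℓ ≠ 0 → p + ℓ ≤ e → wp μ (seg y p ℓ) ≤ θ → L ≤ ℓ) :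
    ∃ p p', q ≤ p ∧ p + L ≤ p' ∧ p' + L ≤ e ∧ ∀ t < L, y (p + t) = y (p' + t) := by
  rw [GoodBlock] at hbad
  push_neg at hbad
  obtain ⟨i, j, hi, hj, hlenEq, hletters, hij⟩ := hbad
  have key : ∀ i j : ℕ, i < dCount μ θ e y q → j < dCount μ θ e y q →
      blkLen μ θ e y (blkPos μ θ e y q i) = blkLen μ θ e y (blkPos μ θ e y q j) →
      (∀ t < blkLen μ θ e y (blkPos μ θ e y q i),
        y (blkPos μ θ e y q i + t) = y (blkPos μ θ e y q j + t)) →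
      i < j →
      ∃ p p', q ≤ p ∧ p + L ≤ p' ∧ p' + L ≤ e ∧ ∀ t < L, y (p + t) = y (p' + t) := by
    intro i j hi hj hlenEq hletters hij
    set p := blkPos μ θ e y q i with hp
    set p' := blkPos μ θ e y q j with hp'
    have hi0 : blkLen μ θ e y p ≠ 0 := by
      have := Nat.notMem_of_lt_sInf (hi : i < dCount μ θ e y q)
      simpa using this
    have hj0 : blkLen μ θ e y p' ≠ 0 := by
      have := Nat.notMem_of_lt_sInf (hj : j < dCount μ θ e y q)
      simpa using this
    obtain ⟨h1, h2, h3⟩ := blkLen_spec hi0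
    obtain ⟨h1', h2', h3'⟩ := blkLen_spec hj0
    have hLi : L ≤ blkLen μ θ e y p := hlen p _ hi0 h2 h3
    have hstep : p + blkLen μ θ e y p ≤ p' := by
      have hsucc : blkPos μ θ e y q (i + 1) = p + blkLen μ θ e y p := rfl
      rw [hp', ← hsucc]
      exact blkPos_mono μ θ e y q (Nat.succ_le_of_lt hij)
    refine ⟨p, p', le_blkPos μ θ e y q i, ?_, ?_, ?_⟩
    · omega
    · have : L ≤ blkLen μ θ e y p' := hlenEq ▸ hLi
      omega
    · intro t ht
      exact hletters t (lt_of_lt_of_le ht hLi)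
  rcases Nat.lt_or_ge i j with h | h
  · exact key i j hi hj hlenEq hletters h
  · have hji : j < i := lt_of_le_of_ne h (Ne.symm hij)
    refine key j i hj hi hlenEq.symm ?_ hji
    intro t ht
    exact (hletters t (hlenEq ▸ ht)).symm

end Parsing


end ZM

namespace ZM

/-- **Lemma 3.5.** Probability that a given block of the block auxiliary parsing is bad. -/
theorem bad_block_prob {A : Type*} [Fintype A] [MeasurableSpace A]
    (μP μQ : Measure (ℕ → A)) [IsProbabilityMeasure μP] [IsProbabilityMeasure μQ]
    (hPstat : MeasurePreserving shift μP μP)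
    (hQstat : MeasurePreserving shift μQ μQ)
    (hsupp : suppSet μQ ⊆ suppSet μP)
    (γp γm : ℝ) (hPFE : CondFE μP γp) (hPSE : CondSE μP γm)
    (kQ : ℕ → ℝ) (hQID : CondID μQ kQ) (hQFE : CondFE μQ γp)
    (ε α : ℝ) (hε : 0 < ε ∧ ε < 1 / 2) (hα : 0 < α ∧ α < γp / (8 * γm)) :
    ∀ s : ℕ, ∀ᶠ N : ℕ in atTop, s < blockM N α →
      (μQ {y | s ∈ badSet μP N α ε y}).toReal ≤
        Real.exp (kQ ⌈ellMinus N γm⌉₊) * (N : ℝ) ^ (-(2 * α)) := by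
  obtain ⟨hε0, hε2⟩ := hε
  obtain ⟨hα0, hα8⟩ := hα
  obtain ⟨hγm, hSE⟩ := hPSE
  obtain ⟨hγp, _⟩ := hPFE
  obtain ⟨_, hFEQ⟩ := hQFE
  obtain ⟨hkmono, hko, hID⟩ := hQID
  haveI hA : Nonempty A := by
    by_contra h
    rw [not_nonempty_iff] at h
    have hempty : (Set.univ : Set (ℕ → A)) = ∅ :=
      Set.eq_empty_iff_forall_notMem.2 fun x _ => h.false (x 0)
    have h1 : μQ Set.univ = 1 := measure_univ
    rw [hempty, measure_empty] at h1
    exact zero_ne_one h1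
  obtain ⟨n₁, hn₁⟩ := Filter.eventually_atTop.1 hSE
  obtain ⟨n₂, hn₂⟩ := Filter.eventually_atTop.1 hFEQ
  -- the minimal positive probability among short words
  set δF : Finset ℝ := insert 1 ((Finset.univ.filter
      (fun pr : (Σ n : Fin n₁, Fin (n : ℕ) → A) => 0 < μP (cyl pr.2))).image
      (fun pr => wp μP pr.2)) with hδF
  have hδFne : δF.Nonempty := ⟨1, Finset.mem_insert_self 1 _⟩
  set δ₀ : ℝ := δF.min' hδFne with hδ₀
  have hδ₀pos : 0 < δ₀ := by
    have hmem := δF.min'_mem hδFne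
    rw [← hδ₀] at hmem
    rcases Finset.mem_insert.1 hmem with h | h
    · rw [h]; norm_num
    · obtain ⟨pr, hpr, hval⟩ := Finset.mem_image.1 h
      have hpos := (Finset.mem_filter.1 hpr).2
      rw [← hval, wp]
      exact ENNReal.toReal_pos (zero_lt_iff.1 hpos) (measure_ne_top μP _)
  have hδ₀le : ∀ n, n < n₁ → ∀ a : Fin n → A, 0 < μP (cyl a) → δ₀ ≤ wp μP a := by
    intro n hn a ha
    refine Finset.min'_le _ _ ?_
    exact Finset.mem_insert_of_mem (Finset.mem_image.2
      ⟨⟨⟨n, hn⟩, a⟩, Finset.mem_filter.2 ⟨Finset.mem_univ _, ha⟩, rfl⟩)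
  intro s
  -- eventual conditions on N
  have Ev1 : ∀ᶠ N : ℕ in atTop, 2 ≤ N := Filter.eventually_ge_atTop 2
  have Ev2 : ∀ᶠ N : ℕ in atTop, (N : ℝ) ^ (-1 - ε) < δ₀ := by
    have h1 : Tendsto (fun x : ℝ => x ^ (-1 - ε)) atTop (nhds 0) := by
      have h2 := tendsto_rpow_neg_atTop (y := 1 + ε) (by linarith)
      have h3 : (fun x : ℝ => x ^ (-1 - ε)) = fun x : ℝ => x ^ (-(1 + ε)) := by
        funext x; congr 1; ring
      rw [h3]; exact h2
    exact (h1.comp tendsto_natCast_atTop_atTop).eventually (gt_mem_nhds hδ₀pos)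
  have Ev3 : ∀ᶠ N : ℕ in atTop, ((max (max n₁ n₂) 1 : ℕ) : ℝ) ≤ ellMinus N γm := by
    have h1 : Tendsto (fun N : ℕ => ellMinus N γm) atTop atTop := by
      have h2 : Tendsto (fun N : ℕ => Real.log N) atTop atTop :=
        Real.tendsto_log_atTop.comp tendsto_natCast_atTop_atTop
      exact h2.atTop_div_const (by linarith)
    exact h1.eventually_ge_atTop _
  filter_upwards [Ev1, Ev2, Ev3] with N hN2 hθδ hLbig
  intro hs
  set L := ⌈ellMinus N γm⌉₊ with hL
  set q := blockStart N α s with hq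
  set e := blockEnd N α s with he
  have hNpos : (0 : ℝ) < N := by exact_mod_cast Nat.lt_of_lt_of_le Nat.zero_lt_two hN2
  have hN1R : (1 : ℝ) < N := by exact_mod_cast hN2
  have hlogN : 0 < Real.log N := Real.log_pos hN1R
  have hγmne : γm ≠ 0 := ne_of_lt hγm
  have hmaxL : max (max n₁ n₂) 1 ≤ L := by
    have h1 : ((max (max n₁ n₂) 1 : ℕ) : ℝ) ≤ (L : ℝ) := le_trans hLbig (Nat.le_ceil _)
    exact_mod_cast h1
  have hn₁L : n₁ ≤ L := by omega
  have hn₂L : n₂ ≤ L := by omega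
  have hL1 : 1 ≤ L := by omega
  have heN : e ≤ N := min_le_right _ _
  have heq : e ≤ q + blockB N α := by
    rw [he, hq, blockEnd, blockStart]
    have h1 : (s + 1) * blockB N α = s * blockB N α + blockB N α := by ring
    omega
  -- every parsed word is long
  have hlen : ∀ y ∈ suppSet μQ, ∀ p ℓ : ℕ, ℓ ≠ 0 → p + ℓ ≤ N →
      wp μP (seg y p ℓ) ≤ (N : ℝ) ^ (-1 - ε) → L ≤ ℓ := by
    intro y hy p ℓ hℓ hpN hwp
    have hyP : y ∈ suppSet μP := hsupp hy
    have hpos : 0 < μP (cyl (seg y p ℓ)) := by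
      have h1 : 0 < μP (cyl (seg y 0 (p + ℓ))) := hyP (p + ℓ)
      have h2 : cyl (seg y 0 (p + ℓ)) ⊆ shift^[p] ⁻¹' cyl (seg y p ℓ) := by
        intro x hx i
        have h3 := hx ⟨p + (i : ℕ), by omega⟩
        simp only [seg] at h3
        show (shift^[p] x) ((i : ℕ)) = seg y p ℓ i
        rw [shift_iterate_apply]
        simp only [seg]
        rw [Nat.add_comm (i : ℕ) p, h3]
        congr 1
        omega
      exact lt_of_lt_of_le (lt_of_lt_of_le h1 (measure_mono h2))
        (measure_preimage_iterate_le hPstat p _)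
    by_contra hcon
    push_neg at hcon
    rcases Nat.lt_or_ge ℓ n₁ with hsm | hbig
    · have h4 := hδ₀le ℓ hsm _ hpos
      linarith
    · have hSEb := hn₁ ℓ hbig _ hpos
      have hℓlt : (ℓ : ℝ) < ellMinus N γm := Nat.lt_ceil.mp hcon
      have hγmell : γm * ellMinus N γm = -(Real.log N / 2) := by
        rw [ellMinus]
        field_simp
      have h5 : γm * ellMinus N γm < γm * ℓ := by
        nlinarith [mul_neg_of_neg_of_pos hγm (sub_pos.2 hℓlt)]
      have hθexp : (N : ℝ) ^ (-1 - ε) = Real.exp (Real.log N * (-1 - ε)) :=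
        Real.rpow_def_of_pos hNpos _
      have h6 : Real.log N * (-1 - ε) ≤ -(Real.log N / 2) := by
        nlinarith [mul_nonneg hlogN.le hε0.le]
      have h7 : (N : ℝ) ^ (-1 - ε) < Real.exp (γm * ℓ) := by
        rw [hθexp]
        apply Real.exp_lt_exp.2
        rw [← hγmell] at h6
        linarith
      linarith
  -- the repeated-pair covering
  set PF : Finset (ℕ × ℕ) := (Finset.Ico q e ×ˢ Finset.Ico q e).filter
    (fun pp => q ≤ pp.1 ∧ pp.1 + L ≤ pp.2 ∧ pp.2 + L ≤ e) with hPF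
  set Gs : ℕ × ℕ → Set (ℕ → A) :=
    (fun pp => {y : ℕ → A | ∀ t < L, y (pp.1 + t) = y (pp.2 + t)}) with hGs
  have hincl : {y : ℕ → A | s ∈ badSet μP N α ε y} ∩ suppSet μQ ⊆ ⋃ pp ∈ PF, Gs pp := by
    rintro y ⟨hbady, hysupp⟩
    have hbady' : s < blockM N α ∧ ¬ GoodBlock μP ((N : ℝ) ^ (-1 - ε)) e y q := hbady
    obtain ⟨p, p', hqp, hpp', hp'e, hlet⟩ := bad_implies_pair hbady'.2
      (fun p ℓ h1 h2 h3 => hlen y hysupp p ℓ h1 (le_trans h2 heN) h3)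
    refine Set.mem_iUnion₂.2 ⟨(p, p'), ?_, ?_⟩
    · refine Finset.mem_filter.2 ⟨Finset.mem_product.2 ⟨?_, ?_⟩, hqp, hpp', hp'e⟩
      · exact Finset.mem_Ico.2 ⟨hqp, by omega⟩
      · exact Finset.mem_Ico.2 ⟨by omega, by omega⟩
    · exact fun t ht => hlet t ht
  have hmax : ∀ u : Fin L → A, 0 < μQ (cyl u) → wp μQ u ≤ Real.exp (γp * L) :=
    fun u hu => hn₂ L hn₂L u hu
  have hGb : ∀ pp ∈ PF, μQ (Gs pp) ≤
      ENNReal.ofReal (Real.exp (kQ L) * Real.exp (γp * L)) := by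
    intro pp hpp
    obtain ⟨hmem, hq1, h12, h2e⟩ := Finset.mem_filter.1 hpp
    have hLr : L ≤ pp.2 - pp.1 := by omega
    have hsetEq : Gs pp =
        {y : ℕ → A | ∀ t < L, y (pp.1 + t) = y (pp.1 + (pp.2 - pp.1) + t)} := by
      simp only [hGs]
      have hq2 : pp.1 + (pp.2 - pp.1) = pp.2 := by omega
      rw [hq2]
    rw [hsetEq]
    exact G_bound hQstat (fun n m a b ha hb => (hID n m a b ha hb).1) hLr
      (le_of_lt (Real.exp_pos _)) hmax pp.1
  have hbound1 : μQ {y : ℕ → A | s ∈ badSet μP N α ε y} ≤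
      (PF.card : ℝ≥0∞) * ENNReal.ofReal (Real.exp (kQ L) * Real.exp (γp * L)) := by
    calc μQ {y : ℕ → A | s ∈ badSet μP N α ε y}
        ≤ μQ (({y : ℕ → A | s ∈ badSet μP N α ε y} ∩ suppSet μQ) ∪ (suppSet μQ)ᶜ) := by
          refine measure_mono fun y hy => ?_
          by_cases h : y ∈ suppSet μQ
          · exact Or.inl ⟨hy, h⟩
          · exact Or.inr h
      _ ≤ μQ ({y : ℕ → A | s ∈ badSet μP N α ε y} ∩ suppSet μQ) + μQ (suppSet μQ)ᶜ :=
          measure_union_le _ _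
      _ = μQ ({y : ℕ → A | s ∈ badSet μP N α ε y} ∩ suppSet μQ) := by
          rw [suppSet_compl_null, add_zero]
      _ ≤ μQ (⋃ pp ∈ PF, Gs pp) := measure_mono hincl
      _ ≤ ∑ pp ∈ PF, μQ (Gs pp) := measure_biUnion_finset_le _ _
      _ ≤ ∑ _pp ∈ PF, ENNReal.ofReal (Real.exp (kQ L) * Real.exp (γp * L)) :=
          Finset.sum_le_sum hGb
      _ = (PF.card : ℝ≥0∞) * ENNReal.ofReal (Real.exp (kQ L) * Real.exp (γp * L)) := by
          rw [Finset.sum_const, nsmul_eq_mul]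
  have htoReal : (μQ {y : ℕ → A | s ∈ badSet μP N α ε y}).toReal ≤
      (PF.card : ℝ) * (Real.exp (kQ L) * Real.exp (γp * L)) := by
    have hne : (PF.card : ℝ≥0∞) * ENNReal.ofReal (Real.exp (kQ L) * Real.exp (γp * L)) ≠ ⊤ :=
      ENNReal.mul_ne_top (ENNReal.natCast_ne_top _) ENNReal.ofReal_ne_top
    have h1 := ENNReal.toReal_mono hne hbound1
    rwa [ENNReal.toReal_mul, ENNReal.toReal_natCast,
      ENNReal.toReal_ofReal (by positivity)] at h1
  have hcard : (PF.card : ℝ) ≤ (N : ℝ) ^ α * (N : ℝ) ^ α := by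
    have h1 : PF.card ≤ blockB N α * blockB N α := by
      calc PF.card ≤ ((Finset.Ico q e) ×ˢ (Finset.Ico q e)).card := Finset.card_filter_le _ _
        _ = (e - q) * (e - q) := by rw [Finset.card_product, Nat.card_Ico]
        _ ≤ blockB N α * blockB N α := Nat.mul_le_mul (by omega) (by omega)
    have h2 : (blockB N α : ℝ) ≤ (N : ℝ) ^ α := by
      rw [blockB]
      exact Nat.floor_le (Real.rpow_nonneg (le_of_lt hNpos) _)
    calc (PF.card : ℝ) ≤ ((blockB N α * blockB N α : ℕ) : ℝ) := by exact_mod_cast h1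
      _ = (blockB N α : ℝ) * (blockB N α : ℝ) := by push_cast; ring
      _ ≤ (N : ℝ) ^ α * (N : ℝ) ^ α :=
          mul_le_mul h2 h2 (Nat.cast_nonneg _) (Real.rpow_nonneg (le_of_lt hNpos) _)
  have hc4 : 4 * α ≤ γp / (2 * γm) := by
    have h1 : γp / (8 * γm) * 4 = γp / (2 * γm) := by
      field_simp
      ring
    linarith
  have hE1 : γp * ellMinus N γm = -(Real.log N * (γp / (2 * γm))) := by
    rw [ellMinus]
    field_simp
  have hexpγ : Real.exp (γp * L) ≤ Real.exp (γp * ellMinus N γm) :=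
    Real.exp_le_exp.2 (mul_le_mul_of_nonpos_left (Nat.le_ceil _) (le_of_lt hγp))
  have hkey : (N : ℝ) ^ α * (N : ℝ) ^ α * Real.exp (γp * ellMinus N γm) ≤
      (N : ℝ) ^ (-(2 * α)) := by
    rw [Real.rpow_def_of_pos hNpos, Real.rpow_def_of_pos hNpos, ← Real.exp_add,
      ← Real.exp_add]
    apply Real.exp_le_exp.2
    rw [hE1]
    nlinarith [mul_nonneg (sub_nonneg.2 hc4) hlogN.le]
  calc (μQ {y : ℕ → A | s ∈ badSet μP N α ε y}).toReal
      ≤ (PF.card : ℝ) * (Real.exp (kQ L) * Real.exp (γp * L)) := htoReal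
    _ ≤ ((N : ℝ) ^ α * (N : ℝ) ^ α) * (Real.exp (kQ L) * Real.exp (γp * L)) :=
        mul_le_mul_of_nonneg_right hcard (by positivity)
    _ ≤ ((N : ℝ) ^ α * (N : ℝ) ^ α) * (Real.exp (kQ L) * Real.exp (γp * ellMinus N γm)) :=
        mul_le_mul_of_nonneg_left
          (mul_le_mul_of_nonneg_left hexpγ (le_of_lt (Real.exp_pos _))) (by positivity)
    _ = Real.exp (kQ L) * ((N : ℝ) ^ α * (N : ℝ) ^ α * Real.exp (γp * ellMinus N γm)) := by
        ring
    _ ≤ Real.exp (kQ L) * (N : ℝ) ^ (-(2 * α)) :=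
        mul_le_mul_of_nonneg_left hkey (le_of_lt (Real.exp_pos _))


end ZM
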